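/- Let m ∈ ℝ and δ > 0 with cos(δm)·cos(δξ) ∈ (-1,1) for ξ in an open interval I. Then p_δ(ξ) := δ⁻¹·arccos(cos(δm)·cos(δξ)) is twice differentiable on I with p_δ''(ξ) = δ·cos(δm)·sin²(δm)·cos(δξ) / (1 - cos²(δm)·cos²(δξ))^{3/2}. -/

import Mathlib

theorem deriv2_dispersion (m δ a b : ℝ) (hδ : 0 < δ)
    (h : ∀ ξ ∈ Set.Ioo a b, Real.cos (δ * m) * Real.cos (δ * ξ) ∈ Set.Ioo (-1 : ℝ) 1) :
    DifferentiableOn ℝ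
        (fun ξ : ℝ => δ⁻¹ * Real.arccos (Real.cos (δ * m) * Real.cos (δ * ξ))) (Set.Ioo a b) ∧
    ∀ ξ ∈ Set.Ioo a b,
      HasDerivAt (deriv (fun ξ : ℝ => δ⁻¹ * Real.arccos (Real.cos (δ * m) * Real.cos (δ * ξ))))
        (δ * Real.cos (δ * m) * Real.sin (δ * m) ^ 2 * Real.cos (δ * ξ) /
          (1 - Real.cos (δ * m) ^ 2 * Real.cos (δ * ξ) ^ 2) ^ ((3 : ℝ) / 2)) ξ := by
  set c := Real.cos (δ * m) with hc
  set f : ℝ → ℝ := fun ξ : ℝ => δ⁻¹ * Real.arccos (c * Real.cos (δ * ξ)) with hf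
  set g : ℝ → ℝ := fun ξ : ℝ =>
    c * Real.sin (δ * ξ) / Real.sqrt (1 - c ^ 2 * Real.cos (δ * ξ) ^ 2) with hg
  -- positivity of 1 - c² cos²
  have hv : ∀ ξ ∈ Set.Ioo a b, 0 < 1 - c ^ 2 * Real.cos (δ * ξ) ^ 2 := by
    intro ξ hξ
    have hx := h ξ hξ
    nlinarith [hx.1, hx.2]
  -- first derivative
  have hd1 : ∀ ξ ∈ Set.Ioo a b, HasDerivAt f (g ξ) ξ := by
    intro ξ hξ
    have hx := h ξ hξ
    have hvξ := hv ξ hξ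
    have hs : 0 < Real.sqrt (1 - c ^ 2 * Real.cos (δ * ξ) ^ 2) := Real.sqrt_pos.2 hvξ
    have hu : HasDerivAt (fun y : ℝ => c * Real.cos (δ * y))
        (c * (-Real.sin (δ * ξ) * δ)) ξ := by
      have h1 : HasDerivAt (fun y : ℝ => δ * y) δ ξ := by
        simpa using (hasDerivAt_id ξ).const_mul δ
      exact ((Real.hasDerivAt_cos (δ * ξ)).comp ξ h1).const_mul c
    have ha := (Real.hasDerivAt_arccos (ne_of_gt hx.1) (ne_of_lt hx.2)).comp ξ hu
    have hfd := ha.const_mul δ⁻¹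
    refine hfd.congr_deriv (Eq.symm ?_)
    have hsq : (c * Real.cos (δ * ξ)) ^ 2 = c ^ 2 * Real.cos (δ * ξ) ^ 2 := by ring
    rw [hg]
    simp only [hsq]
    field_simp
  have hdiff : DifferentiableOn ℝ f (Set.Ioo a b) := fun ξ hξ =>
    ((hd1 ξ hξ).differentiableAt).differentiableWithinAt
  refine ⟨hdiff, ?_⟩
  intro ξ hξ
  -- deriv f = g near ξ
  have heq : deriv f =ᶠ[nhds ξ] g := by
    filter_upwards [isOpen_Ioo.mem_nhds hξ] with y hy
    exact (hd1 y hy).deriv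
  -- derivative of g at ξ
  have hvξ := hv ξ hξ
  have hs : 0 < Real.sqrt (1 - c ^ 2 * Real.cos (δ * ξ) ^ 2) := Real.sqrt_pos.2 hvξ
  have hn : HasDerivAt (fun y : ℝ => c * Real.sin (δ * y))
      (c * (Real.cos (δ * ξ) * δ)) ξ := by
    have h1 : HasDerivAt (fun y : ℝ => δ * y) δ ξ := by
      simpa using (hasDerivAt_id ξ).const_mul δ
    exact ((Real.hasDerivAt_sin (δ * ξ)).comp ξ h1).const_mul c
  have hvD : HasDerivAt (fun y : ℝ => 1 - c ^ 2 * Real.cos (δ * y) ^ 2)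
      (-(c ^ 2 * (2 * Real.cos (δ * ξ) * (-Real.sin (δ * ξ) * δ)))) ξ := by
    have h1 : HasDerivAt (fun y : ℝ => δ * y) δ ξ := by
      simpa using (hasDerivAt_id ξ).const_mul δ
    have h2 : HasDerivAt (fun y : ℝ => Real.cos (δ * y)) (-Real.sin (δ * ξ) * δ) ξ :=
      (Real.hasDerivAt_cos (δ * ξ)).comp ξ h1
    have h3 := ((h2.pow 2).const_mul (c ^ 2)).const_sub 1
    refine h3.congr_deriv (Eq.symm ?_)
    ring
  have hsD : HasDerivAt (fun y : ℝ => Real.sqrt (1 - c ^ 2 * Real.cos (δ * y) ^ 2))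
      ((-(c ^ 2 * (2 * Real.cos (δ * ξ) * (-Real.sin (δ * ξ) * δ)))) /
        (2 * Real.sqrt (1 - c ^ 2 * Real.cos (δ * ξ) ^ 2))) ξ :=
    hvD.sqrt (ne_of_gt hvξ)
  have hgD := hn.div hsD (ne_of_gt hs)
  have hfinal : HasDerivAt g
      (δ * c * Real.sin (δ * m) ^ 2 * Real.cos (δ * ξ) /
        (1 - c ^ 2 * Real.cos (δ * ξ) ^ 2) ^ ((3 : ℝ) / 2)) ξ := by
    refine hgD.congr_deriv (Eq.symm ?_)
    have hsq : Real.sqrt (1 - c ^ 2 * Real.cos (δ * ξ) ^ 2) ^ 2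
        = 1 - c ^ 2 * Real.cos (δ * ξ) ^ 2 := Real.sq_sqrt (le_of_lt hvξ)
    have hrpow : (1 - c ^ 2 * Real.cos (δ * ξ) ^ 2) ^ ((3 : ℝ) / 2)
        = (1 - c ^ 2 * Real.cos (δ * ξ) ^ 2) * Real.sqrt (1 - c ^ 2 * Real.cos (δ * ξ) ^ 2) := by
      rw [Real.sqrt_eq_rpow, ← Real.rpow_one_add' (le_of_lt hvξ) (by norm_num)]
      norm_num
    have hsin : Real.sin (δ * m) ^ 2 = 1 - c ^ 2 := by
      have := Real.sin_sq_add_cos_sq (δ * m)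
      rw [hc]; linarith
    rw [hrpow, hsin]
    rw [div_eq_div_iff (by positivity) (by positivity)]
    field_simp
    have hp : Real.sin (δ * ξ) ^ 2 = 1 - Real.cos (δ * ξ) ^ 2 := by
      have := Real.sin_sq_add_cos_sq (δ * ξ); linarith
    have hs3 : Real.sqrt (1 - c ^ 2 * Real.cos (δ * ξ) ^ 2) ^ 3
        = Real.sqrt (1 - c ^ 2 * Real.cos (δ * ξ) ^ 2) * (1 - c ^ 2 * Real.cos (δ * ξ) ^ 2) := by
      rw [pow_succ', hsq]
    simp only [hs3, hsq, hp]
    ring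
  exact hfinal.congr_of_eventuallyEq heq
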